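/- If a is a non-invertible transformation of {1,...,n} of rank k, x ∈ image(a), and y ∉ image(a), then a∘(x y) = a∘e for some idempotent transformation e of rank k. -/

import Mathlib

/-- The full transformation monoid on `{1,...,n}`, modeled as `Function.End (Fin n)`
(multiplication is composition). -/
abbrev Tn (n : ℕ) := Function.End (Fin n)

/-- A permutation viewed as a transformation. -/
def ofPerm {n : ℕ} (g : Equiv.Perm (Fin n)) : Tn n := ⇑g

/-- The rank of a transformation: the size of its image. -/
def rnk {n : ℕ} (a : Tn n) : ℕ := (Finset.univ.image a).card

/-- The symmetric group embedded in `Tn n` as a set. -/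
def perms (n : ℕ) : Set (Tn n) := Set.range (fun g : Equiv.Perm (Fin n) => ofPerm g)

/-- The `S_n`-conjugacy class of a transformation. -/
def conjClass {n : ℕ} (t : Tn n) : Set (Tn n) :=
  {s | ∃ g : Equiv.Perm (Fin n), s = ofPerm g⁻¹ * t * ofPerm g}

/-- If `x` is in the image of `a` and `y` is not, then `a∘(x y) = a∘e` for an idempotent
of the same rank. -/
theorem stmt3 (n k : ℕ) (a : Tn n) (ha : ¬ Function.Bijective a) (hk : rnk a = k)
    (x y : Fin n) (hx : x ∈ Set.range a) (hy : y ∉ Set.range a) :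
    ∃ e : Tn n, e * e = e ∧ rnk e = k ∧ ofPerm (Equiv.swap x y) * a = e * a := by
  classical
  have hxy : x ≠ y := fun h => hy (h ▸ hx)
  set e : Tn n := fun z => if z ∈ Set.range a then Equiv.swap x y z else y with he
  have hee : ∀ z, z ∈ Set.range a → e z = Equiv.swap x y z := fun z hz => if_pos hz
  have hen : ∀ z, z ∉ Set.range a → e z = y := fun z hz => if_neg hz
  refine ⟨e, ?_, ?_, ?_⟩
  · funext z
    show e (e z) = e z
    by_cases hz : z ∈ Set.range a
    · rw [hee z hz]
      by_cases hzx : z = x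
      · subst hzx
        rw [Equiv.swap_apply_left, hen y hy]
      · have hzy : z ≠ y := fun h => hy (h ▸ hz)
        rw [Equiv.swap_apply_of_ne_of_ne hzx hzy, hee z hz,
          Equiv.swap_apply_of_ne_of_ne hzx hzy]
    · rw [hen z hz, hen y hy]
  · have himg : Finset.univ.image e = (Finset.univ.image a).image (Equiv.swap x y) := by
      ext z
      simp only [Finset.mem_image (f := (e : Fin n → Fin n)), Finset.mem_image (f := (a : Fin n → Fin n)), Finset.mem_image, Finset.mem_univ, true_and]
      constructor
      · rintro ⟨w, rfl⟩
        by_cases hw : w ∈ Set.range a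
        · obtain ⟨u, hu⟩ := hw
          exact ⟨w, ⟨u, hu⟩, (hee w ⟨u, hu⟩).symm⟩
        · obtain ⟨u, hu⟩ := hx
          refine ⟨x, ⟨u, hu⟩, ?_⟩
          rw [Equiv.swap_apply_left, hen w hw]
      · rintro ⟨w, ⟨u, hu⟩, rfl⟩
        exact ⟨w, hee w ⟨u, hu⟩⟩
    have : rnk e = rnk a := by
      rw [rnk, rnk, himg, Finset.card_image_of_injective _ (Equiv.swap x y).injective]
    rw [this, hk]
  · funext z
    show Equiv.swap x y (a z) = e (a z)
    rw [hee (a z) (Set.mem_range_self z)]
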